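/- Let Ω = ((Ψ_n, M_n, P_n))_{n∈ℕ} be an admissible module-sequence. Then the feature extractor Φ_Ω is Lipschitz-continuous with Lipschitz constant 1: for all f, h ∈ L²(ℝ^d), |||Φ_Ω(f) − Φ_Ω(h)||| := (Σ_{n≥0} Σ_{q∈Λ₁^n} ‖(U[q]f)∗χ_n − (U[q]h)∗χ_n‖₂²)^{1/2} ≤ ‖f − h‖₂. -/

import Mathlib

open MeasureTheory
open scoped ENNReal FourierTransform

noncomputable section

/-- ℝ^d as a Euclidean space. -/
abbrev Ed (d : ℕ) : Type := EuclideanSpace ℝ (Fin d)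

/-- Convolution (f ∗ g)(x) = ∫ f(y) g(x − y) dy. -/
def convol {d : ℕ} (f g : Ed d → ℂ) : Ed d → ℂ := fun x => ∫ y, f y * g (x - y)

/-- One network layer: U[λ]f = S^{d/2} · P(M(f ∗ g))(S·). -/
def layerU {d : ℕ} (S : ℝ) (P M : (Ed d → ℂ) → (Ed d → ℂ)) (g : Ed d → ℂ)
    (f : Ed d → ℂ) : Ed d → ℂ :=
  fun x => ((S ^ ((d : ℝ) / 2) : ℝ) : ℂ) * P (M (convol f g)) (S • x)

/-- Iterated layer operators along a path q = (λ₁, …, λ_n):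
U[q]f = U_n[λ_n] ⋯ U₁[λ₁] f. -/
def pathU {d : ℕ} (Λ : ℕ → Type) (g : (n : ℕ) → Λ n → Ed d → ℂ)
    (M P : ℕ → (Ed d → ℂ) → (Ed d → ℂ)) (S : ℕ → ℝ) (n : ℕ)
    (q : (k : Fin n) → Λ k.1) (f : Ed d → ℂ) : Ed d → ℂ :=
  Fin.foldl n (fun h k => layerU (S k.1) (P k.1) (M k.1) (g k.1 (q k)) h) f

section Aux

variable {d : ℕ}

lemma aux_conv_int {f g : Ed d → ℂ} (hf : MemLp f 2 volume) (hg : MemLp g 2 volume)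
    (x : Ed d) : Integrable (fun y => f y * g (x - y)) volume := by
  have hgx : MemLp (fun y => g (x - y)) 2 volume :=
    hg.comp_measurePreserving (Measure.measurePreserving_sub_left volume x)
  have h1 : MemLp (f • fun y => g (x - y)) 1 volume :=
    hgx.smul hf
  have h2 : (f • fun y => g (x - y)) = fun y => f y * g (x - y) := rfl
  rw [← memLp_one_iff_integrable, ← h2]
  exact h1

lemma aux_conv_sub {f h k : Ed d → ℂ} (hf : MemLp f 2 volume) (hh : MemLp h 2 volume)
    (hk : MemLp k 2 volume) : convol f k - convol h k = convol (f - h) k := by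
  funext x
  simp only [Pi.sub_apply, convol]
  rw [← integral_sub (aux_conv_int hf hk x) (aux_conv_int hh hk x)]
  congr 1; funext y; simp [sub_mul]

lemma aux_conv_aesm {f g : Ed d → ℂ} (hf : MemLp f 2 volume) (hg : MemLp g 2 volume) :
    AEStronglyMeasurable (convol f g) volume := by
  have h := (hf.1.convolution_integrand (L := ContinuousLinearMap.mul ℝ ℂ)
    (μ := volume) hg.1)
  exact h.integral_prod_right'

lemma aux_dilate {St : ℝ} (hS : 0 < St) {G : Ed d → ℂ}
    (hG : AEStronglyMeasurable G volume) :
    eLpNorm (fun x => ((St ^ ((d : ℝ) / 2) : ℝ) : ℂ) * G (St • x)) 2 volume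
      = eLpNorm G 2 volume := by
  have hfr : Module.finrank ℝ (Ed d) = d := by
    simp [finrank_euclideanSpace]
  have hmap : Measure.map (St • · : Ed d → Ed d) volume
      = ENNReal.ofReal |(St ^ d)⁻¹| • volume := by
    rw [Measure.map_addHaar_smul volume hS.ne']
    rw [hfr]
  have hGm : AEStronglyMeasurable G (Measure.map (St • · : Ed d → Ed d) volume) := by
    rw [hmap]; exact hG.mono_ac Measure.smul_absolutelyContinuous
  have h1 : eLpNorm (fun x : Ed d => G (St • x)) 2 volume
      = eLpNorm G 2 (Measure.map (St • · : Ed d → Ed d) volume) := by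
    rw [eLpNorm_map_measure hGm (measurable_const_smul St).aemeasurable]
    rfl
  have h2 : (fun x : Ed d => ((St ^ ((d : ℝ) / 2) : ℝ) : ℂ) * G (St • x))
      = ((St ^ ((d : ℝ) / 2) : ℝ) : ℂ) • (fun x : Ed d => G (St • x)) := rfl
  rw [h2, eLpNorm_const_smul, h1, hmap,
    eLpNorm_smul_measure_of_ne_top (by norm_num : (2 : ℝ≥0∞) ≠ ∞)]
  rw [smul_eq_mul, ← mul_assoc]
  have htR : (1 / (2 : ℝ≥0∞)).toReal = (1 / 2 : ℝ) := by
    simp [ENNReal.toReal_inv]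
  rw [htR]
  have habs : |(St ^ d)⁻¹| = (St ^ d)⁻¹ := abs_of_pos (by positivity)
  have hnn : ‖((St ^ ((d : ℝ) / 2) : ℝ) : ℂ)‖ₑ
      = ENNReal.ofReal (St ^ ((d : ℝ) / 2)) := by
    rw [← Real.enorm_eq_ofReal (Real.rpow_nonneg hS.le _)]
    rw [← ofReal_norm_eq_enorm, ← ofReal_norm_eq_enorm, Complex.norm_real]
  have hpow : ENNReal.ofReal ((St ^ d)⁻¹) ^ (1 / 2 : ℝ)
      = ENNReal.ofReal (St ^ (-((d : ℝ) / 2))) := by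
    have hid : ((St ^ d)⁻¹ : ℝ) = St ^ (-(d : ℝ)) := by
      rw [← Real.rpow_natCast St d, ← Real.rpow_neg hS.le]
    rw [hid, ENNReal.ofReal_rpow_of_pos (Real.rpow_pos_of_pos hS _),
      ← Real.rpow_mul hS.le]
    congr 1; ring_nf
  rw [habs, hnn, hpow, ← ENNReal.ofReal_mul (Real.rpow_nonneg hS.le _),
    ← Real.rpow_add hS]
  norm_num

lemma aux_dilate_mem {St : ℝ} (hS : 0 < St) {G : Ed d → ℂ} (hG : MemLp G 2 volume) :
    MemLp (fun x => ((St ^ ((d : ℝ) / 2) : ℝ) : ℂ) * G (St • x)) 2 volume := by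
  refine ⟨?_, ?_⟩
  · have h0 : AEStronglyMeasurable (fun x : Ed d => G (St • x)) volume :=
      hG.1.comp_quasiMeasurePreserving (Measure.quasiMeasurePreserving_smul volume hS.ne')
    exact h0.const_smul (((St ^ ((d : ℝ) / 2) : ℝ) : ℂ))
  · rw [aux_dilate hS hG.1]
    exact hG.2

lemma layer_mem {St : ℝ} (hS : 0 < St) {Pn Mn : (Ed d → ℂ) → (Ed d → ℂ)} {g0 F : Ed d → ℂ}
    (hPM : MemLp (Pn (Mn (convol F g0))) 2 volume) :
    MemLp (layerU St Pn Mn g0 F) 2 volume :=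
  aux_dilate_mem hS hPM

lemma layer_bound {St Ln Rn : ℝ} (hS : 0 < St)
    {Pn Mn : (Ed d → ℂ) → (Ed d → ℂ)} {g0 F H : Ed d → ℂ}
    (hcF : MemLp (convol F g0) 2 volume) (hcH : MemLp (convol H g0) 2 volume)
    (hMmem : ∀ u, MemLp u 2 volume → MemLp (Mn u) 2 volume)
    (hPmem : ∀ u, MemLp u 2 volume → MemLp (Pn u) 2 volume)
    (hMlip : ∀ u v, MemLp u 2 volume → MemLp v 2 volume →
      eLpNorm (Mn u - Mn v) 2 volume ≤ ENNReal.ofReal Ln * eLpNorm (u - v) 2 volume)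
    (hPlip : ∀ u v, MemLp u 2 volume → MemLp v 2 volume →
      eLpNorm (Pn u - Pn v) 2 volume ≤ ENNReal.ofReal Rn * eLpNorm (u - v) 2 volume) :
    eLpNorm (layerU St Pn Mn g0 F - layerU St Pn Mn g0 H) 2 volume ≤
      ENNReal.ofReal Rn * (ENNReal.ofReal Ln *
        eLpNorm (convol F g0 - convol H g0) 2 volume) := by
  have hEq : layerU St Pn Mn g0 F - layerU St Pn Mn g0 H
      = fun x => ((St ^ ((d : ℝ) / 2) : ℝ) : ℂ) *
          (Pn (Mn (convol F g0)) - Pn (Mn (convol H g0))) (St • x) := by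
    funext x
    simp only [Pi.sub_apply, layerU]
    ring
  rw [hEq, aux_dilate hS ((hPmem _ (hMmem _ hcF)).sub (hPmem _ (hMmem _ hcH))).1]
  refine le_trans (hPlip _ _ (hMmem _ hcF) (hMmem _ hcH)) ?_
  exact mul_le_mul_right (hMlip _ _ hcF hcH) _

lemma pathU_succ {Λ : ℕ → Type} (g : (n : ℕ) → Λ n → Ed d → ℂ)
    (M P : ℕ → (Ed d → ℂ) → (Ed d → ℂ)) (S : ℕ → ℝ) (n : ℕ)
    (q : (k : Fin (n + 1)) → Λ k.1) (f : Ed d → ℂ) :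
    pathU Λ g M P S (n + 1) q f
      = layerU (S n) (P n) (M n) (g n (q (Fin.last n)))
          (pathU Λ g M P S n (fun k => q k.castSucc) f) := by
  show Fin.foldl (n + 1) _ f = _
  rw [Fin.foldl_succ_last]
  rfl

lemma pathU_zero {Λ : ℕ → Type} (g : (n : ℕ) → Λ n → Ed d → ℂ)
    (M P : ℕ → (Ed d → ℂ) → (Ed d → ℂ)) (S : ℕ → ℝ)
    (q : (k : Fin 0) → Λ k.1) (f : Ed d → ℂ) :
    pathU Λ g M P S 0 q f = f :=
  Fin.foldl_zero _ _

lemma sq_lt_top {x : ℝ≥0∞} (hx : x ^ 2 < ⊤) : x < ⊤ := by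
  by_contra hc
  push_neg at hc
  rw [top_le_iff.mp hc, ENNReal.top_pow (by norm_num)] at hx
  exact lt_irrefl _ hx

end Aux

/-- The feature extractor of an admissible module-sequence is Lipschitz-continuous
with Lipschitz constant 1. -/
theorem stmt_12 {d : ℕ}
    {Λ : ℕ → Type} [∀ n, Countable (Λ n)]
    (g : (n : ℕ) → Λ n → Ed d → ℂ) (χ : ℕ → Ed d → ℂ)
    (A B L R S : ℕ → ℝ)
    (M P : ℕ → (Ed d → ℂ) → (Ed d → ℂ))
    (hg1 : ∀ n lam, MemLp (g n lam) 1 volume) (hg2 : ∀ n lam, MemLp (g n lam) 2 volume)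
    (hχ1 : ∀ n, MemLp (χ n) 1 volume) (hχ2 : ∀ n, MemLp (χ n) 2 volume)
    (hA : ∀ n, 0 < A n) (hB : ∀ n, 0 < B n) (hL : ∀ n, 0 ≤ L n) (hR : ∀ n, 0 ≤ R n)
    (hS : ∀ n, 1 ≤ S n)
    (hframe : ∀ (n : ℕ) (f : Ed d → ℂ), MemLp f 2 volume →
      ENNReal.ofReal (A n) * eLpNorm f 2 volume ^ 2 ≤
          eLpNorm (convol f (χ n)) 2 volume ^ 2 +
            ∑' lam : Λ n, eLpNorm (convol f (g n lam)) 2 volume ^ 2 ∧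
        eLpNorm (convol f (χ n)) 2 volume ^ 2 +
            ∑' lam : Λ n, eLpNorm (convol f (g n lam)) 2 volume ^ 2 ≤
          ENNReal.ofReal (B n) * eLpNorm f 2 volume ^ 2)
    (hMmem : ∀ (n : ℕ) (f : Ed d → ℂ), MemLp f 2 volume → MemLp (M n f) 2 volume)
    (hPmem : ∀ (n : ℕ) (f : Ed d → ℂ), MemLp f 2 volume → MemLp (P n f) 2 volume)
    (hMlip : ∀ (n : ℕ) (f h : Ed d → ℂ), MemLp f 2 volume → MemLp h 2 volume →
      eLpNorm (M n f - M n h) 2 volume ≤ ENNReal.ofReal (L n) * eLpNorm (f - h) 2 volume)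
    (hPlip : ∀ (n : ℕ) (f h : Ed d → ℂ), MemLp f 2 volume → MemLp h 2 volume →
      eLpNorm (P n f - P n h) 2 volume ≤ ENNReal.ofReal (R n) * eLpNorm (f - h) 2 volume)
    (hM0 : ∀ n, M n 0 = 0) (hP0 : ∀ n, P n 0 = 0)
    (hadm : ∀ n, max (B n) (B n * L n ^ 2 * R n ^ 2) ≤ 1) :
    ∀ f h : Ed d → ℂ, MemLp f 2 volume → MemLp h 2 volume →
      (∑' n : ℕ, ∑' (q : (k : Fin n) → Λ k.1),
          eLpNorm (convol (pathU Λ g M P S n q f) (χ n) -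
            convol (pathU Λ g M P S n q h) (χ n)) 2 volume ^ 2) ^ (1 / 2 : ℝ) ≤
        eLpNorm (f - h) 2 volume := by
  intro f h hf hh
  -- convolutions of L² path outputs are in L² (via the frame upper bound)
  have convMem : ∀ (n : ℕ) (F : Ed d → ℂ), MemLp F 2 volume →
      MemLp (convol F (χ n)) 2 volume ∧
        ∀ lam : Λ n, MemLp (convol F (g n lam)) 2 volume := by
    intro n F hF
    have hup := (hframe n F hF).2
    have hfin : eLpNorm (convol F (χ n)) 2 volume ^ 2 +
        ∑' lam : Λ n, eLpNorm (convol F (g n lam)) 2 volume ^ 2 < ⊤ := by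
      refine lt_of_le_of_lt hup ?_
      exact ENNReal.mul_lt_top ENNReal.ofReal_lt_top (ENNReal.pow_lt_top hF.2)
    constructor
    · refine ⟨aux_conv_aesm hF (hχ2 n), ?_⟩
      exact sq_lt_top (lt_of_le_of_lt le_self_add hfin)
    · intro lam
      refine ⟨aux_conv_aesm hF (hg2 n lam), ?_⟩
      refine sq_lt_top (lt_of_le_of_lt (le_trans (ENNReal.le_tsum lam) le_add_self) hfin)
  -- path outputs stay in L²
  have pathMem : ∀ (n : ℕ) (q : (k : Fin n) → Λ k.1) (F : Ed d → ℂ),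
      MemLp F 2 volume → MemLp (pathU Λ g M P S n q F) 2 volume := by
    intro n
    induction n with
    | zero => intro q F hF; rw [pathU_zero]; exact hF
    | succ n ih =>
      intro q F hF
      rw [pathU_succ]
      have hbase := ih (fun k => q k.castSucc) F hF
      have hc := (convMem n _ hbase).2 (q (Fin.last n))
      exact layer_mem (lt_of_lt_of_le one_pos (hS n)) (hPmem n _ (hMmem n _ hc))
  -- the one-step inequality
  have step : ∀ n : ℕ,
      (∑' q : (k : Fin n) → Λ k.1,
        eLpNorm (convol (pathU Λ g M P S n q f) (χ n) -
          convol (pathU Λ g M P S n q h) (χ n)) 2 volume ^ 2) +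
      (∑' q : (k : Fin (n + 1)) → Λ k.1,
        eLpNorm (pathU Λ g M P S (n + 1) q f - pathU Λ g M P S (n + 1) q h) 2 volume ^ 2)
      ≤ ∑' q : (k : Fin n) → Λ k.1,
          eLpNorm (pathU Λ g M P S n q f - pathU Λ g M P S n q h) 2 volume ^ 2 := by
    intro n
    -- reindex the (n+1)-fold sum
    have hre : (∑' q : (k : Fin (n + 1)) → Λ k.1,
        eLpNorm (pathU Λ g M P S (n + 1) q f - pathU Λ g M P S (n + 1) q h) 2 volume ^ 2)
        = ∑' q : (k : Fin n) → Λ k.1, ∑' lam : Λ n,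
            eLpNorm (layerU (S n) (P n) (M n) (g n lam) (pathU Λ g M P S n q f) -
              layerU (S n) (P n) (M n) (g n lam) (pathU Λ g M P S n q h)) 2 volume ^ 2 := by
      rw [← (Fin.snocEquiv (fun k : Fin (n + 1) => Λ k.1)).tsum_eq]
      rw [ENNReal.tsum_prod']
      rw [ENNReal.tsum_comm]
      refine tsum_congr fun q => tsum_congr fun lam => ?_
      have epath : ∀ u : Ed d → ℂ,
          pathU Λ g M P S (n + 1) (Fin.snocEquiv (fun k : Fin (n + 1) => Λ k.1) (lam, q)) u
            = layerU (S n) (P n) (M n) (g n lam) (pathU Λ g M P S n q u) := by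
        intro u
        rw [pathU_succ]
        have e1 : (Fin.snocEquiv (fun k : Fin (n + 1) => Λ k.1) (lam, q)) (Fin.last n)
            = lam := by simp [Fin.snocEquiv]
        have e2 : (fun k : Fin n =>
            (Fin.snocEquiv (fun k : Fin (n + 1) => Λ k.1) (lam, q)) k.castSucc) = q := by
          funext k; simp [Fin.snocEquiv]
        rw [e1, e2]
      rw [epath f, epath h]
    rw [hre, ← ENNReal.tsum_add]
    refine ENNReal.tsum_le_tsum fun q => ?_
    -- per-path estimate
    set F := pathU Λ g M P S n q f with hFdef
    set H := pathU Λ g M P S n q h with hHdef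
    have hF : MemLp F 2 volume := pathMem n q f hf
    have hH : MemLp H 2 volume := pathMem n q h hh
    have hFH : MemLp (F - H) 2 volume := hF.sub hH
    have hsubχ : convol F (χ n) - convol H (χ n) = convol (F - H) (χ n) :=
      aux_conv_sub hF hH (hχ2 n)
    have hsubg : ∀ lam : Λ n, convol F (g n lam) - convol H (g n lam)
        = convol (F - H) (g n lam) := fun lam => aux_conv_sub hF hH (hg2 n lam)
    have hlay : ∀ lam : Λ n,
        eLpNorm (layerU (S n) (P n) (M n) (g n lam) F -
          layerU (S n) (P n) (M n) (g n lam) H) 2 volume ^ 2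
        ≤ ENNReal.ofReal (R n) ^ 2 * (ENNReal.ofReal (L n) ^ 2 *
            eLpNorm (convol (F - H) (g n lam)) 2 volume ^ 2) := by
      intro lam
      have hb := layer_bound (lt_of_lt_of_le one_pos (hS n))
        ((convMem n F hF).2 lam) ((convMem n H hH).2 lam)
        (hMmem n) (hPmem n) (hMlip n) (hPlip n)
      rw [hsubg lam] at hb
      calc eLpNorm (layerU (S n) (P n) (M n) (g n lam) F -
            layerU (S n) (P n) (M n) (g n lam) H) 2 volume ^ 2
          ≤ (ENNReal.ofReal (R n) * (ENNReal.ofReal (L n) *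
              eLpNorm (convol (F - H) (g n lam)) 2 volume)) ^ 2 :=
            pow_le_pow_left₀ zero_le hb 2
        _ = ENNReal.ofReal (R n) ^ 2 * (ENNReal.ofReal (L n) ^ 2 *
              eLpNorm (convol (F - H) (g n lam)) 2 volume ^ 2) := by
            rw [mul_pow, mul_pow]
    have hfr2 := (hframe n (F - H) hFH).2
    set c := eLpNorm (convol (F - H) (χ n)) 2 volume ^ 2 with hc
    set s := ∑' lam : Λ n, eLpNorm (convol (F - H) (g n lam)) 2 volume ^ 2 with hs
    set K := ENNReal.ofReal (R n) ^ 2 * ENNReal.ofReal (L n) ^ 2 with hK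
    have hmax : max 1 K * ENNReal.ofReal (B n) ≤ 1 := by
      rcases max_cases 1 K with ⟨hm, _⟩ | ⟨hm, _⟩ <;> rw [hm]
      · rw [one_mul]
        exact ENNReal.ofReal_le_one.mpr (le_trans (le_max_left _ _) (hadm n))
      · have hKB : K * ENNReal.ofReal (B n)
            = ENNReal.ofReal (R n ^ 2 * L n ^ 2 * B n) := by
          rw [hK, ← ENNReal.ofReal_pow (hR n), ← ENNReal.ofReal_pow (hL n),
            ← ENNReal.ofReal_mul (by positivity), ← ENNReal.ofReal_mul (by positivity)]
        rw [hKB]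
        refine ENNReal.ofReal_le_one.mpr ?_
        have h1 : B n * L n ^ 2 * R n ^ 2 ≤ 1 := le_trans (le_max_right _ _) (hadm n)
        nlinarith [h1]
    calc eLpNorm (convol F (χ n) - convol H (χ n)) 2 volume ^ 2 +
          ∑' lam : Λ n, eLpNorm (layerU (S n) (P n) (M n) (g n lam) F -
            layerU (S n) (P n) (M n) (g n lam) H) 2 volume ^ 2
        ≤ c + K * s := by
          rw [hsubχ]
          refine add_le_add_right ?_ c
          refine le_trans (ENNReal.tsum_le_tsum hlay) ?_
          rw [ENNReal.tsum_mul_left, ENNReal.tsum_mul_left, hK, hs, mul_assoc]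
      _ ≤ max 1 K * c + max 1 K * s :=
          add_le_add (le_mul_of_one_le_left zero_le (le_max_left _ _))
            (mul_le_mul_left (le_max_right _ _) _)
      _ = max 1 K * (c + s) := (mul_add _ _ _).symm
      _ ≤ max 1 K * (ENNReal.ofReal (B n) * eLpNorm (F - H) 2 volume ^ 2) :=
          mul_le_mul_right hfr2 _
      _ = (max 1 K * ENNReal.ofReal (B n)) * eLpNorm (F - H) 2 volume ^ 2 :=
          (mul_assoc _ _ _).symm
      _ ≤ 1 * eLpNorm (F - H) 2 volume ^ 2 := mul_le_mul_left hmax _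
      _ = eLpNorm (pathU Λ g M P S n q f - pathU Λ g M P S n q h) 2 volume ^ 2 :=
          one_mul _
  -- telescoping
  have tele : ∀ N : ℕ,
      (∑ n ∈ Finset.range N, ∑' q : (k : Fin n) → Λ k.1,
        eLpNorm (convol (pathU Λ g M P S n q f) (χ n) -
          convol (pathU Λ g M P S n q h) (χ n)) 2 volume ^ 2) +
      (∑' q : (k : Fin N) → Λ k.1,
        eLpNorm (pathU Λ g M P S N q f - pathU Λ g M P S N q h) 2 volume ^ 2)
      ≤ ∑' q : (k : Fin 0) → Λ k.1,
          eLpNorm (pathU Λ g M P S 0 q f - pathU Λ g M P S 0 q h) 2 volume ^ 2 := by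
    intro N
    induction N with
    | zero => simp
    | succ N ih =>
      rw [Finset.sum_range_succ, add_assoc]
      exact le_trans (add_le_add_right (step N) _) ih
  have ha0 : (∑' q : (k : Fin 0) → Λ k.1,
      eLpNorm (pathU Λ g M P S 0 q f - pathU Λ g M P S 0 q h) 2 volume ^ 2)
      = eLpNorm (f - h) 2 volume ^ 2 := by
    have hu : ∀ q : (k : Fin 0) → Λ k.1,
        pathU Λ g M P S 0 q f - pathU Λ g M P S 0 q h = f - h := fun q => by
      rw [pathU_zero, pathU_zero]
    rw [tsum_eq_single (fun k : Fin 0 => k.elim0)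
      (fun q hq => absurd (funext fun k => k.elim0) hq)]
    rw [hu]
  have htsum : (∑' n : ℕ, ∑' q : (k : Fin n) → Λ k.1,
      eLpNorm (convol (pathU Λ g M P S n q f) (χ n) -
        convol (pathU Λ g M P S n q h) (χ n)) 2 volume ^ 2)
      ≤ eLpNorm (f - h) 2 volume ^ 2 := by
    rw [ENNReal.tsum_eq_iSup_nat]
    refine iSup_le fun N => ?_
    exact le_trans le_self_add (le_trans (tele N) (le_of_eq ha0))
  calc (∑' n : ℕ, ∑' q : (k : Fin n) → Λ k.1,
        eLpNorm (convol (pathU Λ g M P S n q f) (χ n) -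
          convol (pathU Λ g M P S n q h) (χ n)) 2 volume ^ 2) ^ (1 / 2 : ℝ)
      ≤ (eLpNorm (f - h) 2 volume ^ 2) ^ (1 / 2 : ℝ) :=
        ENNReal.rpow_le_rpow htsum (by norm_num)
    _ = eLpNorm (f - h) 2 volume := by
        rw [← ENNReal.rpow_natCast (eLpNorm (f - h) 2 volume) 2, ← ENNReal.rpow_mul]
        norm_num
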